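/- Consider a pursuer at p moving with speed u under constant bearing against an evader at e moving with speed v < u, with relative distance r(t) = dist(p(t), e(t)). If the pursuer's velocity satisfies the constant-bearing condition, i.e., the component of the relative velocity perpendicular to the line of sight is zero, and the pursuer closes along the line of sight, then ṙ(t) = v·cos(θ_E - φ) - u·cos(θ_P - φ) ≤ -(u - v) < 0, where φ is the line-of-sight angle and θ_E, θ_P are the evader's and pursuer's heading angles satisfying u·sin(θ_P - φ) = v·sin(θ_E - φ). -/

import Mathlib

theorem constant_bearing_closing_rate
    (xP yP xE yE θP θE φ r : ℝ → ℝ) (u v t : ℝ)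
    (hv : 0 ≤ v) (huv : v < u)
    (hr : ∀ s, r s = Real.sqrt ((xE s - xP s) ^ 2 + (yE s - yP s) ^ 2))
    (hrpos : 0 < r t)
    (hφcos : Real.cos (φ t) * r t = xE t - xP t)
    (hφsin : Real.sin (φ t) * r t = yE t - yP t)
    (hxP : HasDerivAt xP (u * Real.cos (θP t)) t)
    (hyP : HasDerivAt yP (u * Real.sin (θP t)) t)
    (hxE : HasDerivAt xE (v * Real.cos (θE t)) t)
    (hyE : HasDerivAt yE (v * Real.sin (θE t)) t)
    (hcb : u * Real.sin (θP t - φ t) = v * Real.sin (θE t - φ t))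
    (hclose : 0 ≤ Real.cos (θP t - φ t)) :
    HasDerivAt r (v * Real.cos (θE t - φ t) - u * Real.cos (θP t - φ t)) t ∧
      v * Real.cos (θE t - φ t) - u * Real.cos (θP t - φ t) ≤ -(u - v) := by
  constructor
  · have hgd : HasDerivAt (fun s => (xE s - xP s) ^ 2 + (yE s - yP s) ^ 2)
        (2 * (xE t - xP t) ^ 1 * (v * Real.cos (θE t) - u * Real.cos (θP t)) +
         2 * (yE t - yP t) ^ 1 * (v * Real.sin (θE t) - u * Real.sin (θP t))) t :=
      ((hxE.sub hxP).pow 2).add ((hyE.sub hyP).pow 2)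
    have hgt : (xE t - xP t) ^ 2 + (yE t - yP t) ^ 2 ≠ 0 := by
      have : Real.sqrt ((xE t - xP t) ^ 2 + (yE t - yP t) ^ 2) > 0 := by
        rw [← hr]; exact hrpos
      intro h
      rw [h, Real.sqrt_zero] at this
      exact lt_irrefl 0 this
    have hsq := (Real.hasDerivAt_sqrt hgt).comp t hgd
    have hreq : r = fun s => Real.sqrt ((xE s - xP s) ^ 2 + (yE s - yP s) ^ 2) :=
      funext hr
    rw [hreq]
    refine hsq.congr_deriv ?_
    have hsqrt : Real.sqrt ((xE t - xP t) ^ 2 + (yE t - yP t) ^ 2) = r t := (hr t).symm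
    rw [hsqrt, ← hφcos, ← hφsin, Real.cos_sub, Real.cos_sub]
    have hrne : r t ≠ 0 := ne_of_gt hrpos
    field_simp
    ring
  · set α := θP t - φ t
    set β := θE t - φ t
    have h1 : Real.sin α ^ 2 + Real.cos α ^ 2 = 1 := Real.sin_sq_add_cos_sq α
    have h2 : Real.sin β ^ 2 + Real.cos β ^ 2 = 1 := Real.sin_sq_add_cos_sq β
    have h3 : Real.cos β ≤ 1 := Real.cos_le_one β
    have h4 : -1 ≤ Real.cos β := Real.neg_one_le_cos β
    have h5 : (u * Real.sin α) ^ 2 = (v * Real.sin β) ^ 2 := by rw [hcb]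
    rcases le_or_gt (u - v + v * Real.cos β) 0 with hX | hX
    · have huα : 0 ≤ u * Real.cos α := mul_nonneg (by linarith) hclose
      linarith
    · have t1 : (u * Real.cos α) ^ 2 + (u * Real.sin α) ^ 2 = u ^ 2 := by
        linear_combination u ^ 2 * h1
      have t2 : (v * Real.cos β) ^ 2 + (v * Real.sin β) ^ 2 = v ^ 2 := by
        linear_combination v ^ 2 * h2
      have hsq : (u - v + v * Real.cos β) ^ 2 ≤ (u * Real.cos α) ^ 2 := by
        nlinarith [t1, t2, h5, mul_nonneg (mul_nonneg hv (by linarith : (0:ℝ) ≤ u - v))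
          (by linarith : (0:ℝ) ≤ 1 - Real.cos β)]
      have huα : 0 ≤ u * Real.cos α := mul_nonneg (by linarith) hclose
      nlinarith [hsq, huα, hX]
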